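/- arXiv:2310.06141 — 2 statements merged into one kernel-verified Lean document; each statement's English description precedes it below -/
import Mathlib

section
/- For every ρ with 0 < ρ < 1 there exists a network instance (a directed graph, linear link costs, a single two-stage application) and a feasible forwarding/offloading strategy φ satisfying the KKT condition (for every node i and out-direction j: ∂D/∂φ_{ij} = min_{j'} ∂D/∂φ_{ij'} if φ_{ij} > 0, and ∂D/∂φ_{ij} ≥ min_{j'} ∂D/∂φ_{ij'} if φ_{ij} = 0), such that D(φ*)/D(φ) = ρ where φ* is a global optimum. In particular, KKT points can be arbitrarily suboptimal. -/
/-! KKT points can be arbitrarily suboptimal (Proposition 1).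

We model a single two-stage application (stage 0 = data, stage 1 = results after one
computation task) on a network with node set `Fin n`, linear link costs `c0, c1` (per stage),
linear computation costs `cc`, exogenous data inputs `r`, and destination `d`.
A strategy consists of forwarding/offloading fractions `φ0 φ1 : Fin n → Option (Fin n) → ℝ`,
where direction `none` is the local CPU (offloading); stage-1 flows are never computed again
and exit at the destination `d`. -/

/-- Feasibility of a forwarding/offloading strategy. -/
def FeasibleStrategy (n : ℕ) (d : Fin n) (φ0 φ1 : Fin n → Option (Fin n) → ℝ) : Prop :=
  (∀ i o, 0 ≤ φ0 i o) ∧ (∀ i o, 0 ≤ φ1 i o) ∧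
  (∀ i, ∑ o, φ0 i o = 1) ∧
  (∀ i, φ1 i none = 0) ∧
  (∀ i, i ≠ d → ∑ o, φ1 i o = 1) ∧
  (∀ o, φ1 d o = 0)

/-- The traffic equations determining node traffics `t0, t1` from inputs and strategy. -/
def TrafficEq (n : ℕ) (r : Fin n → ℝ) (φ0 φ1 : Fin n → Option (Fin n) → ℝ)
    (t0 t1 : Fin n → ℝ) : Prop :=
  (∀ i, t0 i = r i + ∑ j, t0 j * φ0 j (some i)) ∧
  (∀ i, t1 i = t0 i * φ0 i none + ∑ j, t1 j * φ1 j (some i))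

/-- Total (linear) network cost: transmission cost of both stages plus computation cost. -/
def TotalCost (n : ℕ) (c0 c1 : Fin n → Fin n → ℝ) (cc : Fin n → ℝ)
    (φ0 φ1 : Fin n → Option (Fin n) → ℝ) (t0 t1 : Fin n → ℝ) : ℝ :=
  (∑ i, ∑ j, c0 i j * (t0 i * φ0 i (some j))) +
  (∑ i, ∑ j, c1 i j * (t1 i * φ1 i (some j))) +
  (∑ i, cc i * (t0 i * φ0 i none))

/-- The recursive marginal costs `h0 i = ∂D/∂t0 i`, `h1 i = ∂D/∂t1 i` for linear costs. -/
def MarginalEq (n : ℕ) (c0 c1 : Fin n → Fin n → ℝ) (cc : Fin n → ℝ)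
    (φ0 φ1 : Fin n → Option (Fin n) → ℝ) (h0 h1 : Fin n → ℝ) : Prop :=
  (∀ i, h1 i = ∑ j, φ1 i (some j) * (c1 i j + h1 j)) ∧
  (∀ i, h0 i = φ0 i none * (cc i + h1 i) + ∑ j, φ0 i (some j) * (c0 i j + h0 j))

/-- The KKT condition \eqref{Condition_KKT}: the partial derivative
`∂D/∂φ_{ij} = t_i · δ_{ij}` equals the minimum over out-directions wherever `φ_{ij} > 0`,
and is `≥` the minimum where `φ_{ij} = 0`. -/
def KKTCondition (n : ℕ) (d : Fin n) (c0 c1 : Fin n → Fin n → ℝ) (cc : Fin n → ℝ)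
    (φ0 φ1 : Fin n → Option (Fin n) → ℝ) (t0 t1 h0 h1 : Fin n → ℝ) : Prop :=
  (∀ i o,
    (0 < φ0 i o →
      t0 i * (o.elim (cc i + h1 i) (fun j => c0 i j + h0 j)) =
        Finset.univ.inf' Finset.univ_nonempty
          (fun o' : Option (Fin n) => t0 i * (o'.elim (cc i + h1 i) (fun j => c0 i j + h0 j)))) ∧
    (φ0 i o = 0 →
      t0 i * (o.elim (cc i + h1 i) (fun j => c0 i j + h0 j)) ≥
        Finset.univ.inf' Finset.univ_nonempty
          (fun o' : Option (Fin n) => t0 i * (o'.elim (cc i + h1 i) (fun j => c0 i j + h0 j))))) ∧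
  (∀ i, i ≠ d → ∀ j,
    (0 < φ1 i (some j) →
      t1 i * (c1 i j + h1 j) =
        Finset.univ.inf' ⟨d, Finset.mem_univ d⟩ (fun j' : Fin n => t1 i * (c1 i j' + h1 j'))) ∧
    (φ1 i (some j) = 0 →
      t1 i * (c1 i j + h1 j) ≥
        Finset.univ.inf' ⟨d, Finset.mem_univ d⟩ (fun j' : Fin n => t1 i * (c1 i j' + h1 j'))))

/-- **Proposition 1.** For any `0 < ρ < 1` there exists a network instance with linear costs
and a single two-stage application, a feasible strategy `φ` satisfying the KKT condition, and
a globally optimal feasible strategy `φ*`, such that `D(φ*)/D(φ) = ρ`. -/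
theorem kkt_arbitrarily_suboptimal (ρ : ℝ) (hρ0 : 0 < ρ) (hρ1 : ρ < 1) :
    ∃ (n : ℕ) (d : Fin n) (c0 c1 : Fin n → Fin n → ℝ) (cc : Fin n → ℝ) (r : Fin n → ℝ)
      (φ0 φ1 φ0s φ1s : Fin n → Option (Fin n) → ℝ) (t0 t1 t0s t1s h0 h1 : Fin n → ℝ),
      (∀ i j, 0 ≤ c0 i j) ∧ (∀ i j, 0 ≤ c1 i j) ∧ (∀ i, 0 ≤ cc i) ∧ (∀ i, 0 ≤ r i) ∧
      -- the KKT point φ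
      FeasibleStrategy n d φ0 φ1 ∧ TrafficEq n r φ0 φ1 t0 t1 ∧ (∀ i, 0 ≤ t0 i ∧ 0 ≤ t1 i) ∧
      MarginalEq n c0 c1 cc φ0 φ1 h0 h1 ∧
      KKTCondition n d c0 c1 cc φ0 φ1 t0 t1 h0 h1 ∧
      -- the global optimum φ*
      FeasibleStrategy n d φ0s φ1s ∧ TrafficEq n r φ0s φ1s t0s t1s ∧
      (∀ i, 0 ≤ t0s i ∧ 0 ≤ t1s i) ∧
      (∀ φ0' φ1' t0' t1', FeasibleStrategy n d φ0' φ1' → TrafficEq n r φ0' φ1' t0' t1' →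
        (∀ i, 0 ≤ t0' i ∧ 0 ≤ t1' i) →
        TotalCost n c0 c1 cc φ0s φ1s t0s t1s ≤ TotalCost n c0 c1 cc φ0' φ1' t0' t1') ∧
      -- the suboptimality ratio
      TotalCost n c0 c1 cc φ0s φ1s t0s t1s / TotalCost n c0 c1 cc φ0 φ1 t0 t1 = ρ := by
  refine ⟨3, 2, !![2, ρ/2, 1; 2, 2, ρ/2; 2, 2, 2], fun _ _ => 0, ![2,2,0], ![1,0,0],
    (fun i o => o.elim (![0,0,1] i) (fun j => !![0,0,1;1,0,0;0,0,0] i j)),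
    (fun i o => o.elim 0 (fun j => !![0,0,1;0,0,1;0,0,0] i j)),
    (fun i o => o.elim (![0,0,1] i) (fun j => !![0,1,0;0,0,1;0,0,0] i j)),
    (fun i o => o.elim 0 (fun j => !![0,0,1;0,0,1;0,0,0] i j)),
    ![1,0,1], ![0,0,1], ![1,1,1], ![0,0,1], ![1,3,0], ![0,0,0],
    ?_, ?_, ?_, ?_, ?_, ?_, ?_, ?_, ?_, ?_, ?_, ?_, ?_, ?_⟩
  · intro i j; fin_cases i <;> fin_cases j <;> norm_num [Matrix.vecHead, Matrix.vecTail] <;> linarith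
  · intro i j; exact le_refl 0
  · intro i; fin_cases i <;> norm_num
  · intro i; fin_cases i <;> norm_num
  · refine ⟨?_, ?_, ?_, ?_, ?_, ?_⟩
    · rintro i (_|j) <;> [skip; fin_cases j] <;> fin_cases i <;> simp
    · rintro i (_|j) <;> [skip; fin_cases j] <;> fin_cases i <;> simp
    · intro i; rw [Fintype.sum_option, Fin.sum_univ_three]; fin_cases i <;> norm_num [Matrix.cons_val_two, Matrix.tail_cons, Matrix.head_cons]
    · intro i; simp
    · intro i hi; rw [Fintype.sum_option, Fin.sum_univ_three]
      fin_cases i <;> simp_all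
    · rintro (_|j) <;> [skip; fin_cases j] <;> simp
  · constructor <;> intro i <;> rw [Fin.sum_univ_three] <;> fin_cases i <;> norm_num [Matrix.cons_val_two, Matrix.tail_cons, Matrix.head_cons]
  · intro i; fin_cases i <;> norm_num
  · constructor <;> intro i <;> rw [Fin.sum_univ_three] <;> fin_cases i <;> norm_num [Matrix.cons_val_two, Matrix.tail_cons, Matrix.head_cons]
  · constructor
    · intro i o
      constructor
      · intro h
        fin_cases i
        · rcases o with _|j
          · norm_num at h
          · fin_cases j
            · norm_num at h
            · norm_num at h
            · refine le_antisymm (Finset.le_inf' _ _ ?_) (Finset.inf'_le _ (Finset.mem_univ _))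
              rintro (_|j) -
              · norm_num
              · fin_cases j <;> norm_num <;> linarith
        · refine le_antisymm (Finset.le_inf' _ _ ?_) (Finset.inf'_le _ (Finset.mem_univ _))
          rintro (_|j) - <;> rcases o with _|j' <;> [skip; skip; fin_cases j; fin_cases j] <;>
            norm_num
        · rcases o with _|j
          · refine le_antisymm (Finset.le_inf' _ _ ?_) (Finset.inf'_le _ (Finset.mem_univ _))
            rintro (_|j) -
            · norm_num
            · fin_cases j <;> norm_num
          · fin_cases j <;> norm_num at h
      · intro _; exact Finset.inf'_le _ (Finset.mem_univ _)
    · intro i hi j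
      constructor
      · intro h
        fin_cases i
        · refine le_antisymm (Finset.le_inf' _ _ ?_) (Finset.inf'_le _ (Finset.mem_univ _))
          intro b _; norm_num
        · refine le_antisymm (Finset.le_inf' _ _ ?_) (Finset.inf'_le _ (Finset.mem_univ _))
          intro b _; norm_num
        · exact absurd rfl hi
      · intro _; exact Finset.inf'_le _ (Finset.mem_univ _)
  · refine ⟨?_, ?_, ?_, ?_, ?_, ?_⟩
    · rintro i (_|j) <;> [skip; fin_cases j] <;> fin_cases i <;> simp
    · rintro i (_|j) <;> [skip; fin_cases j] <;> fin_cases i <;> simp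
    · intro i; rw [Fintype.sum_option, Fin.sum_univ_three]; fin_cases i <;> norm_num [Matrix.cons_val_two, Matrix.tail_cons, Matrix.head_cons]
    · intro i; simp
    · intro i hi; rw [Fintype.sum_option, Fin.sum_univ_three]
      fin_cases i <;> simp_all
    · rintro (_|j) <;> [skip; fin_cases j] <;> simp
  · constructor <;> intro i <;> rw [Fin.sum_univ_three] <;> fin_cases i <;> norm_num [Matrix.cons_val_two, Matrix.tail_cons, Matrix.head_cons]
  · intro i; fin_cases i <;> norm_num
  · intro p0 p1 s0 s1 hf ht hnn
    obtain ⟨hp0, hp1, hsum, -, -, -⟩ := hf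
    obtain ⟨ht0, -⟩ := ht
    have hA : TotalCost 3 (!![2, ρ/2, 1; 2, 2, ρ/2; 2, 2, 2]) (fun _ _ => 0) ![2,2,0]
        (fun i o => o.elim (![0,0,1] i) (fun j => !![0,1,0;0,0,1;0,0,0] i j))
        (fun i o => o.elim 0 (fun j => !![0,0,1;0,0,1;0,0,0] i j)) ![1,1,1] ![0,0,1] = ρ := by
      norm_num [TotalCost, Fin.sum_univ_three, Matrix.vecHead, Matrix.vecTail, Matrix.cons_val_two, Matrix.tail_cons, Matrix.head_cons]; try ring
    rw [hA]
    have e0 := ht0 0; have e1 := ht0 1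
    rw [Fin.sum_univ_three] at e0 e1
    simp only [Matrix.cons_val_zero, Matrix.cons_val_one, Matrix.head_cons] at e0 e1
    have m0 : s0 0 * p0 0 none + (s0 0 * p0 0 (some 0) + s0 0 * p0 0 (some 1)
        + s0 0 * p0 0 (some 2)) = s0 0 := by
      have h := hsum 0; rw [Fintype.sum_option, Fin.sum_univ_three] at h
      linear_combination s0 0 * h
    have m1 : s0 1 * p0 1 none + (s0 1 * p0 1 (some 0) + s0 1 * p0 1 (some 1)
        + s0 1 * p0 1 (some 2)) = s0 1 := by
      have h := hsum 1; rw [Fintype.sum_option, Fin.sum_univ_three] at h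
      linear_combination s0 1 * h
    have xn : ∀ i o, (0:ℝ) ≤ s0 i * p0 i o := fun i o => mul_nonneg (hnn i).1 (hp0 i o)
    have m0r := congrArg (HMul.hMul ρ) m0
    have m1r := congrArg (HMul.hMul (ρ/2)) m1
    have e0r := congrArg (HMul.hMul ρ) e0
    have e1r := congrArg (HMul.hMul (ρ/2)) e1
    have k02 : (0:ℝ) ≤ (1 - ρ) * (s0 0 * p0 0 (some 2)) :=
      mul_nonneg (by linarith) (xn 0 (some 2))
    have kc0 : (0:ℝ) ≤ (2 - ρ) * (s0 0 * p0 0 none) :=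
      mul_nonneg (by linarith) (xn 0 none)
    have kc1 : (0:ℝ) ≤ (2 - ρ/2) * (s0 1 * p0 1 none) :=
      mul_nonneg (by linarith) (xn 1 none)
    have k10 : (0:ℝ) ≤ (2 + ρ/2) * (s0 1 * p0 1 (some 0)) :=
      mul_nonneg (by linarith) (xn 1 (some 0))
    have k20 : (0:ℝ) ≤ (2 + ρ) * (s0 2 * p0 2 (some 0)) :=
      mul_nonneg (by linarith) (xn 2 (some 0))
    have k21 : (0:ℝ) ≤ (2 + ρ/2) * (s0 2 * p0 2 (some 1)) :=
      mul_nonneg (by linarith) (xn 2 (some 1))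
    have x00 := xn 0 (some 0); have x11 := xn 1 (some 1); have x22 := xn 2 (some 2)
    have hc1 : ∀ i : Fin 3, (0:ℝ) ≤ s1 i * p1 i (some 0) ∧ (0:ℝ) ≤ s1 i * p1 i (some 1)
        ∧ (0:ℝ) ≤ s1 i * p1 i (some 2) := fun i =>
      ⟨mul_nonneg (hnn i).2 (hp1 i _), mul_nonneg (hnn i).2 (hp1 i _),
       mul_nonneg (hnn i).2 (hp1 i _)⟩
    simp only [TotalCost, Fin.sum_univ_three, Matrix.cons_val_zero, Matrix.cons_val_one,
      Matrix.head_cons, zero_mul, add_zero, zero_add, Matrix.vecHead, Matrix.vecTail]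
    norm_num [Matrix.vecHead, Matrix.vecTail, Matrix.cons_val_two, Matrix.tail_cons, Matrix.head_cons]
    linarith [m0r, m1r, e0r, e1r, k02, kc0, kc1, k10, k20, k21, x00, x11, x22]
  · have h1 : TotalCost 3 (!![2, ρ/2, 1; 2, 2, ρ/2; 2, 2, 2]) (fun _ _ => 0) ![2,2,0]
        (fun i o => o.elim (![0,0,1] i) (fun j => !![0,1,0;0,0,1;0,0,0] i j))
        (fun i o => o.elim 0 (fun j => !![0,0,1;0,0,1;0,0,0] i j)) ![1,1,1] ![0,0,1] = ρ := by
      norm_num [TotalCost, Fin.sum_univ_three, Matrix.vecHead, Matrix.vecTail, Matrix.cons_val_two, Matrix.tail_cons, Matrix.head_cons]; try ring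
    have h2 : TotalCost 3 (!![2, ρ/2, 1; 2, 2, ρ/2; 2, 2, 2]) (fun _ _ => 0) ![2,2,0]
        (fun i o => o.elim (![0,0,1] i) (fun j => !![0,0,1;1,0,0;0,0,0] i j))
        (fun i o => o.elim 0 (fun j => !![0,0,1;0,0,1;0,0,0] i j)) ![1,0,1] ![0,0,1] = 1 := by
      norm_num [TotalCost, Fin.sum_univ_three, Matrix.vecHead, Matrix.vecTail, Matrix.cons_val_two, Matrix.tail_cons, Matrix.head_cons]
    rw [h1, h2, div_one]
end

section
/- Suppose for every node i and every stage (a,k) the value h_i(a,k) := ∂D/∂t_i(a,k) satisfies h_i(a,k) = Σ_j φ_{ij}(a,k)·(c_{ij}(a,k) + h_j(a,k)) + φ_{i0}(a,k)·(w_i(a,k)·C'_i + h_i(a,k+1)) with all c_{ij}(a,k) > 0 and C'_i ≥ 0, h ≥ 0. Then along any directed path n_1, ..., n_L with φ_{n_l n_{l+1}}(a,k) > 0 for each l, the sequence h_{n_l}(a,k) is strictly decreasing, provided φ satisfies the sufficiency condition that positive fractions are only placed on directions j minimizing c_{ij}(a,k) + h_j(a,k) (resp. w_i C'_i + h_i(a,k+1)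 for j = 0). -/
/-- Monotone decrease of node marginals along used paths. Fix a stage `(a,k)`; `h i` is the
node marginal `∂D/∂t_i(a,k)`, `hnext i` the next-stage marginal `∂D/∂t_i(a,k+1)`,
`c i j > 0` the link marginal costs, `q i = w_i·C'_i ≥ 0` the computation marginal.
If `h` satisfies the weighted-average recursion and `φ` places positive mass only on
directions minimizing the modified marginal (sufficiency condition), then `h` strictly
decreases along any directed path with positive forwarding fractions. -/
theorem marginal_strictly_decreasing_along_path {V : Type*} [Fintype V]
    (φ : V → Option V → ℝ) (c : V → V → ℝ) (q : V → ℝ) (h hnext : V → ℝ)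
    (hφnn : ∀ i o, 0 ≤ φ i o) (hφsum : ∀ i, ∑ o, φ i o = 1)
    (hc : ∀ i j, 0 < c i j) (hq : ∀ i, 0 ≤ q i)
    (hh : ∀ i, 0 ≤ h i) (hhnext : ∀ i, 0 ≤ hnext i)
    (hrec : ∀ i, h i = (∑ j, φ i (some j) * (c i j + h j)) + φ i none * (q i + hnext i))
    (hsuff : ∀ i o, 0 < φ i o →
      o.elim (q i + hnext i) (fun j => c i j + h j) =
        Finset.univ.inf' Finset.univ_nonempty
          (fun o' : Option V => o'.elim (q i + hnext i) (fun j => c i j + h j)))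
    (L : ℕ) (p : ℕ → V)
    (hpath : ∀ l, l + 1 < L → 0 < φ (p l) (some (p (l + 1)))) :
    ∀ l, l + 1 < L → h (p (l + 1)) < h (p l) := by
  intro l hl
  set i := p l
  set j := p (l + 1)
  have hpos : 0 < φ i (some j) := hpath l hl
  set f : Option V → ℝ := fun o' => o'.elim (q i + hnext i) (fun j => c i j + h j) with hf
  set m : ℝ := Finset.univ.inf' Finset.univ_nonempty f with hm
  have hij : c i j + h j = m := hsuff i (some j) hpos
  have hsum : h i = ∑ o, φ i o * f o := by
    rw [hrec i, Fintype.sum_option]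
    simp [hf]
    ring
  have him : h i = m := by
    rw [hsum]
    have : ∀ o ∈ Finset.univ, φ i o * f o = φ i o * m := by
      intro o _
      rcases lt_or_eq_of_le (hφnn i o) with hlt | heq
      · exact congrArg (φ i o * ·) (hsuff i o hlt)
      · rw [← heq]; ring
    rw [Finset.sum_congr rfl this, ← Finset.sum_mul, hφsum i, one_mul]
  have : h j = h i - c i j := by rw [him, ← hij]; ring
  rw [this]
  linarith [hc i j]
end
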